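/- Let $\lambda_1,\dots,\lambda_n$ be positive real numbers. If $\sum_{i=1}^n (1/\lambda_i) \le v_1$ and $\sum_{i=1}^n \lambda_i \le v_2$, then for every $i$ one has $|\lambda_i - 1| \le \sqrt{v_2(v_1+v_2-2n)}$. -/
import Mathlib


open Finset

/-- Shi's eigenvalue estimate: if `λ i > 0`, `∑ 1/λ i ≤ v₁` and `∑ λ i ≤ v₂`,
then `|λ i - 1| ≤ √(v₂ (v₁ + v₂ - 2n))` for every `i`. -/
theorem stmt0 (n : ℕ) (lam : Fin n → ℝ) (v1 v2 : ℝ)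
    (hpos : ∀ i, 0 < lam i)
    (h1 : ∑ i, (1 / lam i) ≤ v1)
    (h2 : ∑ i, lam i ≤ v2) :
    ∀ i, |lam i - 1| ≤ Real.sqrt (v2 * (v1 + v2 - 2 * n)) := by
  intro i
  have key : ∀ j, (lam j - 1)^2 / lam j = 1 / lam j + lam j - 2 := by
    intro j
    field_simp [(hpos j).ne']
    ring
  have hnn : ∀ j, 0 ≤ (lam j - 1)^2 / lam j := by
    intro j
    exact div_nonneg (sq_nonneg _) (hpos j).le
  have hsum : ∑ j, (lam j - 1)^2 / lam j ≤ v1 + v2 - 2 * n := by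
    have : ∑ j, (lam j - 1)^2 / lam j = (∑ j, 1 / lam j) + (∑ j, lam j) - 2 * n := by
      simp_rw [key]
      rw [Finset.sum_sub_distrib, Finset.sum_add_distrib]
      simp [mul_comm]
    linarith
  have hterm : (lam i - 1)^2 / lam i ≤ v1 + v2 - 2 * n :=
    le_trans (Finset.single_le_sum (fun j _ => hnn j) (Finset.mem_univ i)) hsum
  have hli : lam i ≤ v2 :=
    le_trans (Finset.single_le_sum (fun j _ => (hpos j).le) (Finset.mem_univ i)) h2
  have hsq : (lam i - 1)^2 ≤ v2 * (v1 + v2 - 2 * n) := by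
    have h0 : (lam i - 1)^2 = lam i * ((lam i - 1)^2 / lam i) := by
      field_simp [(hpos i).ne']
    rw [h0]
    exact mul_le_mul hli hterm (hnn i) (le_trans (hpos i).le hli)
  calc |lam i - 1| = Real.sqrt ((lam i - 1)^2) := (Real.sqrt_sq_eq_abs _).symm
    _ ≤ _ := Real.sqrt_le_sqrt hsq
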